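/- Let Ψ : ℝ → ℝ be a nonnegative convex function vanishing only at 0, with ∫ exp(-λΨ(t)) dt < ∞ for all λ > 0. Then the map R(λ) = (∫ Ψ e^{-λΨ}) / (∫ e^{-λΨ}) satisfies lim_{λ→∞} R(λ) = 0. -/

import Mathlib

open MeasureTheory Real Filter Set

theorem orlicz_ratio_tendsto_zero_at_infty
    (Ψ : ℝ → ℝ)
    (hconv : ConvexOn ℝ Set.univ Ψ)
    (hnonneg : ∀ x, 0 ≤ Ψ x)
    (hzero : ∀ x, Ψ x = 0 ↔ x = 0)
    (hint : ∀ l : ℝ, 0 < l → Integrable (fun t => Real.exp (-l * Ψ t))) :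
    Tendsto (fun l : ℝ =>
        (∫ t, Ψ t * Real.exp (-l * Ψ t)) / (∫ t, Real.exp (-l * Ψ t)))
      atTop (nhds 0) := by
  have hcont : Continuous Ψ := by
    rw [← continuousOn_univ]
    exact ConvexOn.continuousOn isOpen_univ hconv
  have hmeas : Measurable Ψ := hcont.measurable
  have hΨ0 : Ψ 0 = 0 := (hzero 0).mpr rfl
  rw [NormedAddCommGroup.tendsto_nhds_zero]
  intro ε hε
  set e := ε / 4 with he
  have he0 : 0 < e := by positivity
  -- continuity at 0 gives a δ-interval where Ψ ≤ e/2
  obtain ⟨δ, hδ0, hδ⟩ : ∃ δ > 0, ∀ x, |x| < δ → Ψ x < e / 2 := by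
    have hev : ∀ᶠ x in nhds (0 : ℝ), Ψ x < e / 2 :=
      Tendsto.eventually_lt_const (by rw [hΨ0]; positivity) hcont.continuousAt
    obtain ⟨δ, hδ0, hδ⟩ := Metric.eventually_nhds_iff.mp hev
    refine ⟨δ, hδ0, fun x hx => ?_⟩
    exact hδ (by simpa [Real.dist_eq] using hx)
  set C := ∫ t, Real.exp (-1 * Ψ t) with hC
  have hCint : Integrable (fun t => Real.exp (-1 * Ψ t)) := hint 1 one_pos
  have hCnonneg : 0 ≤ C := integral_nonneg fun t => (Real.exp_pos _).le
  -- the dominating function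
  set g : ℝ → ℝ := fun l => e + C / (2 * δ) * Real.exp (2 * e - l * (e / 2)) with hg
  have hgt : Tendsto g atTop (nhds e) := by
    have h1 : Tendsto (fun l : ℝ => 2 * e - l * (e / 2)) atTop atBot := by
      have h2 : Tendsto (fun l : ℝ => l * (e / 2)) atTop atTop :=
        Tendsto.atTop_mul_const (by positivity) tendsto_id
      simpa [sub_eq_add_neg] using tendsto_atBot_add_const_left atTop (2 * e) (tendsto_neg_atTop_atBot.comp h2)
    have := (Real.tendsto_exp_atBot.comp h1).const_mul (C / (2 * δ))
    have h3 : Tendsto g atTop (nhds (e + C / (2 * δ) * 0)) :=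
      tendsto_const_nhds.add (by simpa using this)
    simpa using h3
  have hge : ∀ᶠ l in atTop, g l < ε := hgt.eventually_lt_const (by rw [he]; linarith)
  filter_upwards [hge, eventually_ge_atTop (3 : ℝ)] with l hgl hl3
  have hl0 : (0 : ℝ) < l := by linarith
  set D := ∫ t, Real.exp (-l * Ψ t) with hD
  set N := ∫ t, Ψ t * Real.exp (-l * Ψ t) with hN
  have hDint : Integrable (fun t => Real.exp (-l * Ψ t)) := hint l hl0
  -- positivity of denominator
  have hD0 : 0 < D := by
    rw [hD, integral_pos_iff_support_of_nonneg (fun t => (Real.exp_pos _).le) hDint]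
    have : Function.support (fun t => Real.exp (-l * Ψ t)) = Set.univ := by
      ext t; simp [Function.support, (Real.exp_pos _).ne']
    rw [this]
    simp
  -- integrability of numerator
  have hNint : Integrable (fun t => Ψ t * Real.exp (-l * Ψ t)) := by
    refine (hint (l - 1) (by linarith)).mono
      ((hmeas.mul ((hmeas.const_mul (-l)).exp)).aestronglyMeasurable)
      (ae_of_all _ fun t => ?_)
    have h1 : Ψ t ≤ Real.exp (Ψ t) := by
      have := Real.add_one_le_exp (Ψ t); linarith
    rw [Real.norm_eq_abs, Real.norm_eq_abs,
      abs_of_nonneg (mul_nonneg (hnonneg t) (Real.exp_pos _).le),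
      abs_of_nonneg (Real.exp_pos _).le]
    calc Ψ t * Real.exp (-l * Ψ t) ≤ Real.exp (Ψ t) * Real.exp (-l * Ψ t) :=
          mul_le_mul_of_nonneg_right h1 (Real.exp_pos _).le
      _ = Real.exp (-(l - 1) * Ψ t) := by rw [← Real.exp_add]; ring_nf
  -- pointwise bound for the numerator integrand
  have hpt : ∀ t, Ψ t * Real.exp (-l * Ψ t) ≤
      e * Real.exp (-l * Ψ t) + Real.exp (-(l - 2) * e) * Real.exp (-1 * Ψ t) := by
    intro t
    rcases le_or_gt (Ψ t) e with h | h
    · have h1 : Ψ t * Real.exp (-l * Ψ t) ≤ e * Real.exp (-l * Ψ t) :=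
        mul_le_mul_of_nonneg_right h (Real.exp_pos _).le
      have h2 : 0 ≤ Real.exp (-(l - 2) * e) * Real.exp (-1 * Ψ t) :=
        mul_nonneg (Real.exp_pos _).le (Real.exp_pos _).le
      linarith
    · have h1 : Ψ t ≤ Real.exp (Ψ t) := by
        have := Real.add_one_le_exp (Ψ t); linarith
      have h3 : Ψ t * Real.exp (-l * Ψ t) ≤ Real.exp (-(l - 2) * e) * Real.exp (-1 * Ψ t) := by
        calc Ψ t * Real.exp (-l * Ψ t) ≤ Real.exp (Ψ t) * Real.exp (-l * Ψ t) :=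
              mul_le_mul_of_nonneg_right h1 (Real.exp_pos _).le
          _ = Real.exp (-(l - 2) * Ψ t) * Real.exp (-1 * Ψ t) := by
              rw [← Real.exp_add, ← Real.exp_add]; ring_nf
          _ ≤ Real.exp (-(l - 2) * e) * Real.exp (-1 * Ψ t) := by
              apply mul_le_mul_of_nonneg_right _ (Real.exp_pos _).le
              apply Real.exp_le_exp.mpr
              nlinarith
      have h4 : 0 ≤ e * Real.exp (-l * Ψ t) :=
        mul_nonneg he0.le (Real.exp_pos _).le
      linarith
  -- numerator bound
  have hNbound : N ≤ e * D + Real.exp (-(l - 2) * e) * C := by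
    have := integral_mono hNint ((hDint.const_mul e).add (hCint.const_mul _)) hpt
    simp only [Pi.add_apply] at this
    rwa [integral_add (hDint.const_mul e) (hCint.const_mul _),
      integral_const_mul, integral_const_mul] at this
  -- denominator lower bound
  have hDlow : Real.exp (-l * (e / 2)) * (2 * δ) ≤ D := by
    have hsub : ∫ t in Ioo (-δ) δ, Real.exp (-l * Ψ t) ≤ D :=
      setIntegral_le_integral hDint (ae_of_all _ fun t => (Real.exp_pos _).le)
    have hmeasI : volume (Ioo (-δ) δ) ≠ ⊤ := by
      rw [Real.volume_Ioo]; exact ENNReal.ofReal_ne_top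
    have hconst : Real.exp (-l * (e / 2)) * (volume (Ioo (-δ) δ)).toReal ≤
        ∫ t in Ioo (-δ) δ, Real.exp (-l * Ψ t) := by
      apply setIntegral_ge_of_const_le_real measurableSet_Ioo hmeasI
      · intro x hx
        apply Real.exp_le_exp.mpr
        have hx' : |x| < δ := abs_lt.mpr ⟨hx.1, hx.2⟩
        have := (hδ x hx').le
        nlinarith
      · exact hDint.integrableOn
    have hvol : (volume (Ioo (-δ) δ)).toReal = 2 * δ := by
      rw [Real.volume_Ioo, ENNReal.toReal_ofReal (by linarith)]; ring
    rw [hvol] at hconst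
    linarith
  -- assemble
  have hNnonneg : 0 ≤ N :=
    integral_nonneg fun t => mul_nonneg (hnonneg t) (Real.exp_pos _).le
  have hRnonneg : 0 ≤ N / D := div_nonneg hNnonneg hD0.le
  have hkey : N / D ≤ g l := by
    have h1 : N / D ≤ (e * D + Real.exp (-(l - 2) * e) * C) / D :=
      (div_le_div_iff_of_pos_right hD0).mpr hNbound
    have h2 : (e * D + Real.exp (-(l - 2) * e) * C) / D =
        e + Real.exp (-(l - 2) * e) * C / D := by
      rw [add_div, mul_div_assoc, div_self hD0.ne', mul_one]
    have h3 : Real.exp (-(l - 2) * e) * C / D ≤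
        Real.exp (-(l - 2) * e) * C / (Real.exp (-l * (e / 2)) * (2 * δ)) := by
      apply div_le_div_of_nonneg_left (mul_nonneg (Real.exp_pos _).le hCnonneg)
        (by positivity) hDlow
    have h4 : Real.exp (-(l - 2) * e) * C / (Real.exp (-l * (e / 2)) * (2 * δ)) =
        C / (2 * δ) * Real.exp (2 * e - l * (e / 2)) := by
      have hx : Real.exp (-(l - 2) * e) =
          Real.exp (2 * e - l * (e / 2)) * Real.exp (-l * (e / 2)) := by
        rw [← Real.exp_add]; ring_nf
      rw [hx]
      field_simp
    rw [hg]
    calc N / D ≤ e + Real.exp (-(l - 2) * e) * C / D := by rw [← h2]; exact h1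
      _ ≤ e + Real.exp (-(l - 2) * e) * C / (Real.exp (-l * (e / 2)) * (2 * δ)) := by
          linarith
      _ = e + C / (2 * δ) * Real.exp (2 * e - l * (e / 2)) := by rw [h4]
  calc ‖N / D‖ = N / D := by rw [Real.norm_eq_abs, abs_of_nonneg hRnonneg]
    _ ≤ g l := hkey
    _ < ε := hgl
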